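/- arXiv:2210.05488 — 3 statements merged into one kernel-verified Lean document; each statement's English description precedes it below -/
import Mathlib

section
/- If I is a two-sided ideal of a finite-dimensional algebra A over a field k, then the slice rank of the multiplication tensor of the quotient algebra A/I is at most the slice rank of the multiplication tensor of A. -/
open Module Finset

/-- A tensor (written in coordinates) is a *slice* if it factors as a vector times a matrix
in one of the three possible groupings of coordinates. -/
def IsSlice {k : Type*} {ι₁ ι₂ ι₃ : Type*} [CommRing k] (T : ι₁ → ι₂ → ι₃ → k) : Prop :=
  (∃ (f : ι₁ → k) (Q : ι₂ → ι₃ → k), ∀ i j l, T i j l = f i * Q j l) ∨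
  (∃ (f : ι₂ → k) (Q : ι₁ → ι₃ → k), ∀ i j l, T i j l = f j * Q i l) ∨
  (∃ (f : ι₃ → k) (Q : ι₁ → ι₂ → k), ∀ i j l, T i j l = f l * Q i j)

/-- The slice rank of a tensor: the least `r` such that the tensor is a sum of `r` slices. -/
noncomputable def sliceRank {k : Type*} {ι₁ ι₂ ι₃ : Type*} [CommRing k]
    (T : ι₁ → ι₂ → ι₃ → k) : ℕ :=
  sInf {r : ℕ | ∃ S : Fin r → ι₁ → ι₂ → ι₃ → k,
    (∀ m, IsSlice (S m)) ∧ ∀ i j l, T i j l = ∑ m, S m i j l}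

/-- The multiplication tensor of a finite-dimensional algebra `A` over `k`, written in
coordinates with respect to the basis `Module.finBasis k A`:
`T i j l` is the `l`-th coordinate of `e_i * e_j`, i.e. `T = Σ_{i,j} eᵢ* ⊗ eⱼ* ⊗ (eᵢ⬝eⱼ)`. -/
noncomputable def mulTensor (k A : Type*) [Field k] [Ring A] [Algebra k A]
    [FiniteDimensional k A] :
    Fin (finrank k A) → Fin (finrank k A) → Fin (finrank k A) → k :=
  fun i j l => (finBasis k A).repr (finBasis k A i * finBasis k A j) l

/-- Any tensor over finite index sets admits some slice decomposition. -/
lemma exists_decomp {k : Type*} {n₁ n₂ n₃ : ℕ} [CommRing k]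
    (T : Fin n₁ → Fin n₂ → Fin n₃ → k) :
    ∃ S : Fin n₁ → Fin n₁ → Fin n₂ → Fin n₃ → k,
      (∀ m, IsSlice (S m)) ∧ ∀ i j l, T i j l = ∑ m, S m i j l := by
  classical
  refine ⟨fun m i j l => if i = m then T i j l else 0, fun m => ?_, fun i j l => ?_⟩
  · left
    exact ⟨fun i => if i = m then 1 else 0, fun j l => T m j l, by
      intro i j l
      by_cases h : i = m
      · subst h; simp
      · simp [h]⟩
  · simp

lemma sum_rot3 {k : Type*} [AddCommMonoid k] {α β γ : Type*} [Fintype α] [Fintype β] [Fintype γ]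
    (F : α → β → γ → k) :
    ∑ p, ∑ q, ∑ m, F p q m = ∑ m, ∑ p, ∑ q, F p q m :=
  calc ∑ p, ∑ q, ∑ m, F p q m = ∑ p, ∑ m, ∑ q, F p q m :=
        Finset.sum_congr rfl fun p _ => Finset.sum_comm
    _ = ∑ m, ∑ p, ∑ q, F p q m := Finset.sum_comm

lemma sum_rot4 {k : Type*} [AddCommMonoid k] {α β γ δ : Type*}
    [Fintype α] [Fintype β] [Fintype γ] [Fintype δ] (F : α → β → γ → δ → k) :
    ∑ p, ∑ q, ∑ m, ∑ n, F p q m n = ∑ n, ∑ p, ∑ q, ∑ m, F p q m n :=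
  calc ∑ p, ∑ q, ∑ m, ∑ n, F p q m n = ∑ p, ∑ n, ∑ q, ∑ m, F p q m n :=
        Finset.sum_congr rfl fun p _ => sum_rot3 _
    _ = ∑ n, ∑ p, ∑ q, ∑ m, F p q m n := Finset.sum_comm

lemma sum_mul_sum3 {k : Type*} [CommRing k] {α β γ : Type*} [Fintype α] [Fintype β] [Fintype γ]
    (F : α → k) (G : β → γ → k) :
    ∑ p, ∑ q, ∑ m, F p * G q m = (∑ p, F p) * (∑ q, ∑ m, G q m) := by
  rw [Finset.sum_mul]
  refine Finset.sum_congr rfl fun p _ => ?_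
  rw [Finset.mul_sum]
  refine Finset.sum_congr rfl fun q _ => ?_
  rw [Finset.mul_sum]

/-- If `I` is a two-sided ideal of a finite-dimensional `k`-algebra `A`, then the
slice rank of the multiplication tensor of the quotient `A/I` (presented as any
finite-dimensional algebra `B` together with a surjective algebra map `A → B` whose kernel
is `I`) is at most the slice rank of the multiplication tensor of `A`. -/
theorem sliceRank_quotient_le {k A B : Type*} [Field k]
    [Ring A] [Algebra k A] [FiniteDimensional k A]
    [Ring B] [Algebra k B] [FiniteDimensional k B]
    (I : TwoSidedIdeal A) (φ : A →ₐ[k] B) (hφ : Function.Surjective φ)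
    (hker : ∀ a : A, φ a = 0 ↔ a ∈ I) :
    sliceRank (mulTensor k B) ≤ sliceRank (mulTensor k A) := by
  classical
  set bA := finBasis k A with hbA
  set bB := finBasis k B with hbB
  choose a ha using fun i => hφ (bB i)
  set M : Fin (finrank k B) → Fin (finrank k A) → k := fun i p => bA.repr (a i) p with hM
  set P : Fin (finrank k A) → Fin (finrank k B) → k := fun m l => bB.repr (φ (bA m)) l with hP
  have key : ∀ i j l, mulTensor k B i j l =
      ∑ p, ∑ q, ∑ m, M i p * M j q * P m l * mulTensor k A p q m := by
    intro i j l
    have h2 : a i * a j = ∑ p, ∑ q, (M i p * M j q) • (bA p * bA q) := by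
      conv_lhs => rw [← bA.sum_repr (a i), ← bA.sum_repr (a j)]
      rw [Finset.sum_mul]
      refine Finset.sum_congr rfl fun p _ => ?_
      rw [Finset.mul_sum]
      exact Finset.sum_congr rfl fun q _ => smul_mul_smul_comm _ _ _ _
    have h3 : ∀ p q : Fin (finrank k A),
        φ (bA p * bA q) = ∑ m, mulTensor k A p q m • φ (bA m) := by
      intro p q
      conv_lhs => rw [← bA.sum_repr (bA p * bA q)]
      rw [map_sum]
      exact Finset.sum_congr rfl fun m _ => by rw [map_smul]; rfl
    have h1 : mulTensor k B i j l = bB.repr (φ (a i * a j)) l := by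
      rw [map_mul, ha, ha]; rfl
    rw [h1, h2]
    simp only [h3, map_sum, map_smul, Finset.smul_sum, Finsupp.finset_sum_apply,
      Finsupp.smul_apply, smul_eq_mul, Finset.mul_sum]
    refine Finset.sum_congr rfl fun p _ => Finset.sum_congr rfl fun q _ =>
      Finset.sum_congr rfl fun m _ => ?_
    simp only [hP]
    ring
  have transfer : ∀ r : ℕ, (r ∈ {r : ℕ | ∃ S : Fin r → Fin (finrank k A) → Fin (finrank k A) →
        Fin (finrank k A) → k,
      (∀ m, IsSlice (S m)) ∧ ∀ i j l, mulTensor k A i j l = ∑ m, S m i j l}) →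
      sliceRank (mulTensor k B) ≤ r := by
    rintro r ⟨S, hS, hsum⟩
    refine Nat.sInf_le ⟨fun n i j l => ∑ p, ∑ q, ∑ m, M i p * M j q * P m l * S n p q m,
      fun n => ?_, fun i j l => ?_⟩
    · rcases hS n with ⟨f, Q, h⟩ | ⟨f, Q, h⟩ | ⟨f, Q, h⟩
      · left
        refine ⟨fun i => ∑ p, M i p * f p, fun j l => ∑ q, ∑ m, M j q * P m l * Q q m, ?_⟩
        intro i j l
        dsimp only
        rw [← sum_mul_sum3 (fun p => M i p * f p) (fun q m => M j q * P m l * Q q m)]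
        exact Finset.sum_congr rfl fun p _ => Finset.sum_congr rfl fun q _ =>
          Finset.sum_congr rfl fun m _ => by rw [h]; ring
      · right; left
        refine ⟨fun j => ∑ q, M j q * f q, fun i l => ∑ p, ∑ m, M i p * P m l * Q p m, ?_⟩
        intro i j l
        dsimp only
        rw [Finset.sum_comm,
          ← sum_mul_sum3 (fun q => M j q * f q) (fun p m => M i p * P m l * Q p m)]
        exact Finset.sum_congr rfl fun q _ => Finset.sum_congr rfl fun p _ =>
          Finset.sum_congr rfl fun m _ => by rw [h]; ring
      · right; right
        refine ⟨fun l => ∑ m, P m l * f m, fun i j => ∑ p, ∑ q, M i p * M j q * Q p q, ?_⟩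
        intro i j l
        dsimp only
        rw [sum_rot3,
          ← sum_mul_sum3 (fun m => P m l * f m) (fun p q => M i p * M j q * Q p q)]
        exact Finset.sum_congr rfl fun m _ => Finset.sum_congr rfl fun p _ =>
          Finset.sum_congr rfl fun q _ => by rw [h]; ring
    · dsimp only
      rw [key i j l, ← sum_rot4]
      exact Finset.sum_congr rfl fun p _ => Finset.sum_congr rfl fun q _ =>
        Finset.sum_congr rfl fun m _ => by rw [hsum p q m, Finset.mul_sum]
  have hne : {r : ℕ | ∃ S : Fin r → Fin (finrank k A) → Fin (finrank k A) →
        Fin (finrank k A) → k,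
      (∀ m, IsSlice (S m)) ∧ ∀ i j l, mulTensor k A i j l = ∑ m, S m i j l}.Nonempty :=
    ⟨finrank k A, exists_decomp _⟩
  exact transfer _ (Nat.sInf_mem hne)
end

section
/- For a prime p and an algebraically closed field k of characteristic p, the symmetric power representations Sym^d(k²) of SL(2,p) for 0 ≤ d ≤ p-1 (given by the action of SL(2,p) on homogeneous polynomials of degree d in two variables) are pairwise non-isomorphic irreducible representations of dimensions 1, 2, ..., p. -/
open Matrix MvPolynomial Module

/-- Linear substitution of the variables by `g⁻¹`, as an algebra endomorphism of `k[x,y]`: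
`(g · f)(x) = f(g⁻¹ · x)`. -/
noncomputable def substAlg (p : ℕ) [Fact p.Prime] (k : Type) [Field k] [CharP k p]
    (g : SpecialLinearGroup (Fin 2) (ZMod p)) :
    MvPolynomial (Fin 2) k →ₐ[k] MvPolynomial (Fin 2) k :=
  aeval fun i => ∑ j, C (ZMod.castHom dvd_rfl k
    (((g⁻¹ : SpecialLinearGroup (Fin 2) (ZMod p)) : Matrix (Fin 2) (Fin 2) (ZMod p)) i j)) * X j

lemma substAlg_mem (p : ℕ) [Fact p.Prime] (k : Type) [Field k] [CharP k p]
    (g : SpecialLinearGroup (Fin 2) (ZMod p)) (d : ℕ)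
    (f : MvPolynomial (Fin 2) k) (hf : f ∈ homogeneousSubmodule (Fin 2) k d) :
    substAlg p k g f ∈ homogeneousSubmodule (Fin 2) k d := by
  rw [mem_homogeneousSubmodule] at hf ⊢
  have := hf.aeval (fun i => ∑ j, C (ZMod.castHom dvd_rfl k
    (((g⁻¹ : SpecialLinearGroup (Fin 2) (ZMod p)) : Matrix (Fin 2) (Fin 2) (ZMod p)) i j)) * X j)
    (n := 1) ?_
  · simpa [substAlg] using this
  · intro i
    exact IsHomogeneous.sum _ _ _ fun j _ => (isHomogeneous_X _ _).C_mul _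

/-- The action of `SL(2,p)` on the space `Sym^d(k²)` of homogeneous polynomials of
degree `d` in two variables, by linear substitution. -/
noncomputable def symAction (p : ℕ) [Fact p.Prime] (k : Type) [Field k] [CharP k p] (d : ℕ)
    (g : SpecialLinearGroup (Fin 2) (ZMod p)) :
    homogeneousSubmodule (Fin 2) k d →ₗ[k] homogeneousSubmodule (Fin 2) k d :=
  LinearMap.restrict (substAlg p k g).toLinearMap (substAlg_mem p k g d)

namespace SymPowAux

variable (p : ℕ) [Fact p.Prime] (k : Type) [Field k] [CharP k p]

/-- the exponent vector of `x^a y^(d-a)` -/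
noncomputable def sig (d a : ℕ) : Fin 2 →₀ ℕ := Finsupp.single 0 a + Finsupp.single 1 (d - a)

/-- the monomial `x^a y^(d-a)` -/
noncomputable def mon (d a : ℕ) : MvPolynomial (Fin 2) k := X 0 ^ a * X 1 ^ (d - a)

lemma mon_eq (d a : ℕ) : (mon k d a) = monomial (sig d a) (1 : k) := by
  simp [mon, sig, X_pow_eq_monomial, monomial_mul]

lemma sig_apply_zero (d a : ℕ) : sig d a 0 = a := by
  simp [sig, Finsupp.single_apply]

lemma sig_injective (d : ℕ) : Function.Injective (sig d) := by
  intro a b h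
  have := congrArg (fun s : Fin 2 →₀ ℕ => s 0) h
  simpa [sig_apply_zero] using this

lemma mon_mem (d a : ℕ) (h : a ≤ d) : mon k d a ∈ homogeneousSubmodule (Fin 2) k d := by
  rw [mem_homogeneousSubmodule]
  have := ((isHomogeneous_X k (0 : Fin 2)).pow a).mul ((isHomogeneous_X k (1 : Fin 2)).pow (d - a))
  simpa [mon, mul_one, Nat.add_sub_cancel' h] using this

lemma sig_of_homog {d : ℕ} {σ : Fin 2 →₀ ℕ} (h : σ 0 + σ 1 = d) : σ = sig d (σ 0) := by
  ext i
  fin_cases i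
  · simp [sig, Finsupp.single_apply]
  · simp only [sig, Finsupp.add_apply, Finsupp.single_apply]
    norm_num
    omega

lemma degree_eq {d : ℕ} {f : MvPolynomial (Fin 2) k} (hf : f ∈ homogeneousSubmodule (Fin 2) k d)
    {σ : Fin 2 →₀ ℕ} (hσ : σ ∈ f.support) : σ 0 + σ 1 = d := by
  rw [mem_homogeneousSubmodule] at hf
  have h1 : (Finsupp.weight fun _ => 1) σ = d := hf (mem_support_iff.mp hσ)
  rw [← Finsupp.degree_eq_weight_one] at h1
  have h2 : σ.degree = σ 0 + σ 1 := by
    show ∑ i ∈ σ.support, σ i = _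
    rw [Finset.sum_subset (Finset.subset_univ σ.support)]
    · simp [Fin.sum_univ_two]
    · intro x _ hx
      simpa using Finsupp.notMem_support_iff.mp hx
  omega

lemma eq_sum {d : ℕ} {f : MvPolynomial (Fin 2) k} (hf : f ∈ homogeneousSubmodule (Fin 2) k d) :
    f = ∑ a ∈ Finset.range (d + 1), coeff (sig d a) f • mon k d a := by
  have hsub : f.support ⊆ (Finset.range (d + 1)).image (sig d) := by
    intro σ hσ
    have h := degree_eq k hf hσ
    exact Finset.mem_image.mpr ⟨σ 0, Finset.mem_range.mpr (by omega), (sig_of_homog h).symm⟩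
  conv_lhs => rw [f.as_sum]
  rw [Finset.sum_subset hsub (fun σ _ hσ => by
    rw [notMem_support_iff.mp hσ, monomial_zero])]
  rw [Finset.sum_image (fun a _ b _ h => sig_injective d h)]
  refine Finset.sum_congr rfl fun a _ => ?_
  rw [mon_eq, smul_monomial, smul_eq_mul, mul_one]


noncomputable def bas (d : ℕ) : Basis (Fin (d + 1)) k (homogeneousSubmodule (Fin 2) k d) := by
  refine Basis.mk (v := fun a : Fin (d + 1) =>
    (⟨mon k d a, mon_mem k d a (by omega)⟩ : homogeneousSubmodule (Fin 2) k d)) ?_ ?_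
  · apply LinearIndependent.of_comp (homogeneousSubmodule (Fin 2) k d).subtype
    have h1 : LinearIndependent k fun σ : Fin 2 →₀ ℕ => monomial σ (1 : k) := by
      have := (basisMonomials (Fin 2) k).linearIndependent
      rwa [coe_basisMonomials] at this
    have h2 := h1.comp (fun a : Fin (d + 1) => sig d a)
      (fun a b h => Fin.val_injective (sig_injective d h))
    convert h2 using 1
    funext a
    simp [Function.comp, mon_eq]
    all_goals rfl
  · rintro ⟨f, hf⟩ -
    rw [Submodule.mem_span_range_iff_exists_fun k]
    refine ⟨fun a => coeff (sig d a) f, ?_⟩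
    apply Subtype.ext
    push_cast
    rw [Fin.sum_univ_eq_sum_range (fun a => coeff (sig d a) f • mon k d a)]
    exact (eq_sum k hf).symm

lemma finrank_eq (d : ℕ) : finrank k (homogeneousSubmodule (Fin 2) k d) = d + 1 := by
  simpa using finrank_eq_card_basis (bas k d)


lemma substAlg_one : substAlg p k 1 = AlgHom.id k (MvPolynomial (Fin 2) k) := by
  apply algHom_ext
  intro i
  fin_cases i <;>
    simp [substAlg, Fin.sum_univ_two, Matrix.one_apply]

lemma substAlg_mul (g h : SpecialLinearGroup (Fin 2) (ZMod p)) :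
    substAlg p k (g * h) = (substAlg p k g).comp (substAlg p k h) := by
  apply algHom_ext
  intro i
  simp only [substAlg, AlgHom.comp_apply, aeval_X, map_sum, _root_.map_mul, aeval_C,
    _root_.mul_inv_rev, Matrix.SpecialLinearGroup.coe_mul, Matrix.mul_apply, Fin.sum_univ_two, map_add,
    algebraMap_eq]
  fin_cases i <;> ring

/-- upper-triangular unipotent whose inverse is `!![1, c; 0, 1]` -/
def uT (c : ZMod p) : SpecialLinearGroup (Fin 2) (ZMod p) :=
  ⟨!![1, -c; 0, 1], by simp [Matrix.det_fin_two_of]⟩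

/-- lower-triangular unipotent whose inverse is `!![1, 0; c, 1]` -/
def lT (c : ZMod p) : SpecialLinearGroup (Fin 2) (ZMod p) :=
  ⟨!![1, 0; -c, 1], by simp [Matrix.det_fin_two_of]⟩

lemma coe_uT_inv (c : ZMod p) :
    (((uT p c)⁻¹ : SpecialLinearGroup (Fin 2) (ZMod p)) : Matrix (Fin 2) (Fin 2) (ZMod p))
      = !![1, c; 0, 1] := by
  rw [Matrix.SpecialLinearGroup.coe_inv]
  show Matrix.adjugate !![1, -c; 0, 1] = _
  rw [Matrix.adjugate_fin_two_of]
  norm_num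

lemma coe_lT_inv (c : ZMod p) :
    (((lT p c)⁻¹ : SpecialLinearGroup (Fin 2) (ZMod p)) : Matrix (Fin 2) (Fin 2) (ZMod p))
      = !![1, 0; c, 1] := by
  rw [Matrix.SpecialLinearGroup.coe_inv]
  show Matrix.adjugate !![1, 0; -c, 1] = _
  rw [Matrix.adjugate_fin_two_of]
  norm_num

lemma substAlg_uT_X0 (c : ZMod p) :
    substAlg p k (uT p c) (X 0) = X 0 + C (ZMod.castHom dvd_rfl k c) * X 1 := by
  simp only [substAlg, aeval_X, coe_uT_inv, Fin.sum_univ_two]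
  simp

lemma substAlg_uT_X1 (c : ZMod p) :
    substAlg p k (uT p c) (X 1) = X 1 := by
  simp only [substAlg, aeval_X, coe_uT_inv, Fin.sum_univ_two]
  simp

lemma substAlg_lT_X1 (c : ZMod p) :
    substAlg p k (lT p c) (X 1) = C (ZMod.castHom dvd_rfl k c) * X 0 + X 1 := by
  simp only [substAlg, aeval_X, coe_lT_inv, Fin.sum_univ_two]
  simp


lemma expand_pow (t : k) (a b : ℕ) :
    (X 0 + C t * X 1 : MvPolynomial (Fin 2) k) ^ a * X 1 ^ b
      = ∑ j ∈ Finset.range (a + 1),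
          ((a.choose j : k) * t ^ j) • (X 0 ^ (a - j) * X 1 ^ (j + b)) := by
  rw [add_comm (X 0 : MvPolynomial (Fin 2) k), add_pow, Finset.sum_mul]
  refine Finset.sum_congr rfl fun j hj => ?_
  rw [smul_eq_C_mul, _root_.map_mul, C_pow]
  rw [C_eq_coe_nat]
  ring

lemma expand_pow2 (t : k) (d : ℕ) :
    (C t * X 0 + X 1 : MvPolynomial (Fin 2) k) ^ d
      = ∑ j ∈ Finset.range (d + 1), ((d.choose j : k) * t ^ j) • (X 0 ^ j * X 1 ^ (d - j)) := by
  rw [add_pow]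
  refine Finset.sum_congr rfl fun j hj => ?_
  rw [smul_eq_C_mul, _root_.map_mul, C_pow]
  rw [C_eq_coe_nat]
  ring

lemma vand_mem {M : Type} [AddCommGroup M] [Module k M] {n : ℕ} (c : Fin n → k)
    (hc : Function.Injective c) (W : Submodule k M) (v : Fin n → M)
    (h : ∀ i, (∑ j : Fin n, c i ^ (j : ℕ) • v j) ∈ W) (j : Fin n) : v j ∈ W := by
  have hdet : IsUnit (Matrix.vandermonde c).det :=
    (Matrix.det_vandermonde_ne_zero_iff.mpr hc).isUnit
  set A := Matrix.vandermonde c with hA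
  have hinv : A⁻¹ * A = 1 := Matrix.nonsing_inv_mul A hdet
  have key : v j = ∑ i : Fin n, A⁻¹ j i • ∑ j' : Fin n, A i j' • v j' := by
    have : (∑ i : Fin n, A⁻¹ j i • ∑ j' : Fin n, A i j' • v j')
        = ∑ j' : Fin n, ((A⁻¹ * A) j j') • v j' := by
      simp only [Finset.smul_sum, smul_smul, Matrix.mul_apply, Finset.sum_smul]
      rw [Finset.sum_comm]
    rw [this, hinv]
    simp [Matrix.one_apply, ite_smul]
  rw [key]
  refine Submodule.sum_mem _ fun i _ => Submodule.smul_mem _ _ ?_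
  simpa [hA, Matrix.vandermonde_apply] using h i


lemma irreducible_W (d : ℕ) (hd : d + 1 ≤ p) (W : Submodule k (MvPolynomial (Fin 2) k))
    (hWV : W ≤ homogeneousSubmodule (Fin 2) k d)
    (hW : ∀ g : SpecialLinearGroup (Fin 2) (ZMod p), ∀ f ∈ W, substAlg p k g f ∈ W)
    (f : MvPolynomial (Fin 2) k) (hfW : f ∈ W) (hf0 : f ≠ 0) :
    homogeneousSubmodule (Fin 2) k d ≤ W := by
  classical
  have hinj : Function.Injective (fun i : Fin (d + 1) => ((i : ℕ) : k)) := by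
    intro i1 i2 h12
    have := CharP.natCast_injOn_Iio k p (Set.mem_Iio.mpr (by omega : (i1 : ℕ) < p))
      (Set.mem_Iio.mpr (by omega : (i2 : ℕ) < p)) h12
    exact Fin.ext this
  set cst : ZMod p → k := fun c => ZMod.castHom dvd_rfl k c with hcstdef
  have hcst : ∀ i : Fin (d + 1), cst ((i : ℕ) : ZMod p) = ((i : ℕ) : k) := fun i =>
    map_natCast (ZMod.castHom dvd_rfl k) _
  have hfV := hWV hfW
  set lam : ℕ → k := fun a => coeff (sig d a) f with hlam
  set w : ℕ → MvPolynomial (Fin 2) k := fun j =>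
    ∑ a ∈ Finset.range (d + 1), (lam a * (a.choose j : k)) • mon k d (a - j) with hw
  have hg : ∀ c : ZMod p, substAlg p k (uT p c) f
      = ∑ j ∈ Finset.range (d + 1), (cst c) ^ j • w j := by
    intro c
    conv_lhs => rw [eq_sum k hfV]
    rw [map_sum]
    have hterm : ∀ a ∈ Finset.range (d + 1), substAlg p k (uT p c) (lam a • mon k d a)
        = ∑ j ∈ Finset.range (d + 1),
            (cst c) ^ j • ((lam a * (a.choose j : k)) • mon k d (a - j)) := by
      intro a ha
      have ha' : a ≤ d := by
        have := Finset.mem_range.mp ha; omega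
      rw [_root_.map_smul]
      have hmon : substAlg p k (uT p c) (mon k d a)
          = ∑ j ∈ Finset.range (a + 1),
              ((a.choose j : k) * (cst c) ^ j) • (X 0 ^ (a - j) * X 1 ^ (j + (d - a))) := by
        rw [mon, _root_.map_mul, map_pow, map_pow, substAlg_uT_X0, substAlg_uT_X1, expand_pow]
      have e1 : ∑ j ∈ Finset.range (a + 1),
            ((a.choose j : k) * (cst c) ^ j) • (X 0 ^ (a - j) * X 1 ^ (j + (d - a)))
          = ∑ j ∈ Finset.range (d + 1),
            ((a.choose j : k) * (cst c) ^ j) • mon k d (a - j) := by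
        rw [Finset.sum_congr rfl (fun j hj => ?_)]
        · exact Finset.sum_subset (Finset.range_subset_range.mpr (by omega)) (fun j _ hj' => by
            have hja : a < j := by
              rcases Finset.mem_range.not.mp hj' with h'
              omega
            simp [Nat.choose_eq_zero_of_lt hja])
        · have hj' : j ≤ a := by
            have := Finset.mem_range.mp hj; omega
          rw [mon, show j + (d - a) = d - (a - j) by omega]
      rw [hmon, e1, Finset.smul_sum]
      refine Finset.sum_congr rfl fun j _ => ?_
      rw [smul_smul, smul_smul]
      congr 1
      ring
    rw [Finset.sum_congr rfl hterm, Finset.sum_comm]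
    exact Finset.sum_congr rfl fun j _ => (Finset.smul_sum).symm
  have hwW : ∀ j ∈ Finset.range (d + 1), w j ∈ W := by
    intro j hj
    have hv := vand_mem k (fun i : Fin (d + 1) => ((i : ℕ) : k)) hinj W
      (fun j : Fin (d + 1) => w (j : ℕ)) (fun i => ?_) ⟨j, Finset.mem_range.mp hj⟩
    · exact hv
    · have hmem := hW (uT p ((i : ℕ) : ZMod p)) f hfW
      rw [hg ((i : ℕ) : ZMod p), hcst i] at hmem
      rw [Fin.sum_univ_eq_sum_range (fun j => ((i : ℕ) : k) ^ j • w j)]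
      exact hmem
  set S := (Finset.range (d + 1)).filter (fun a => lam a ≠ 0) with hS
  have hSne : S.Nonempty := by
    by_contra h
    apply hf0
    rw [Finset.not_nonempty_iff_eq_empty] at h
    rw [eq_sum k hfV]
    refine Finset.sum_eq_zero fun a ha => ?_
    have hz : lam a = 0 := by
      by_contra h'
      exact Finset.eq_empty_iff_forall_notMem.mp h a (Finset.mem_filter.mpr ⟨ha, h'⟩)
    rw [show coeff (sig d a) f = lam a from rfl, hz, zero_smul]
  set j0 := S.max' hSne with hj0
  have hj0S : j0 ∈ S := S.max'_mem hSne
  have hj0d : j0 ∈ Finset.range (d + 1) := (Finset.mem_filter.mp hj0S).1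
  have hlamj0 : lam j0 ≠ 0 := (Finset.mem_filter.mp hj0S).2
  have hwj0 : w j0 = lam j0 • mon k d 0 := by
    show (∑ a ∈ Finset.range (d + 1), (lam a * (a.choose j0 : k)) • mon k d (a - j0)) = _
    rw [Finset.sum_eq_single j0]
    · simp [Nat.choose_self, Nat.sub_self]
    · intro a ha hne
      rcases lt_or_gt_of_ne hne with h1 | h2
      · simp [Nat.choose_eq_zero_of_lt h1]
      · have hz : lam a = 0 := by
          by_contra h'
          have := S.le_max' a (Finset.mem_filter.mpr ⟨ha, h'⟩)
          omega
        simp [hz]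
    · intro h; exact absurd hj0d h
  have hmon0 : mon k d 0 ∈ W := by
    have h1 := hwW j0 hj0d
    rw [hwj0] at h1
    have h2 := W.smul_mem (lam j0)⁻¹ h1
    rwa [smul_smul, inv_mul_cancel₀ hlamj0, one_smul] at h2
  have hmons : ∀ j ∈ Finset.range (d + 1), mon k d j ∈ W := by
    have hh : ∀ c : ZMod p, substAlg p k (lT p c) (mon k d 0)
        = ∑ j ∈ Finset.range (d + 1), (cst c) ^ j • ((d.choose j : k) • mon k d j) := by
      intro c
      rw [mon]
      simp only [pow_zero, one_mul, Nat.sub_zero]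
      rw [map_pow, substAlg_lT_X1, expand_pow2]
      refine Finset.sum_congr rfl fun j _ => ?_
      rw [mon, smul_smul]
      congr 1
      ring
    intro j hj
    have hv := vand_mem k (fun i : Fin (d + 1) => ((i : ℕ) : k)) hinj W
      (fun j : Fin (d + 1) => (d.choose (j : ℕ) : k) • mon k d (j : ℕ)) (fun i => ?_)
      ⟨j, Finset.mem_range.mp hj⟩
    · have hch : (d.choose j : k) ≠ 0 := by
        rw [Ne, CharP.cast_eq_zero_iff k p]
        intro hdvd
        have h1 : d.choose j ∣ Nat.factorial d := by
          have hj' : j ≤ d := by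
            have := Finset.mem_range.mp hj; omega
          exact ⟨Nat.factorial j * Nat.factorial (d - j), by
            rw [← Nat.choose_mul_factorial_mul_factorial hj']; ring⟩
        have h2 := (Nat.Prime.dvd_factorial (Fact.out : p.Prime)).mp (dvd_trans hdvd h1)
        omega
      have h2 := W.smul_mem (d.choose j : k)⁻¹ hv
      rwa [smul_smul, inv_mul_cancel₀ hch, one_smul] at h2
    · have hmem := hW (lT p ((i : ℕ) : ZMod p)) _ hmon0
      rw [hh ((i : ℕ) : ZMod p), hcst i] at hmem
      rw [Fin.sum_univ_eq_sum_range (fun j => ((i : ℕ) : k) ^ j • ((d.choose j : k) • mon k d j))]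
      exact hmem
  intro x hx
  rw [eq_sum k hx]
  exact Submodule.sum_mem _ fun a ha => Submodule.smul_mem _ _ (hmons a ha)

end SymPowAux

/-- For an algebraically closed field `k` of characteristic `p`, the symmetric
power actions `Sym^d(k²)` of `SL(2,p)`, `0 ≤ d ≤ p-1`, are representations (the action is
multiplicative and unital), of dimensions `d+1` (i.e. `1, 2, ..., p`), irreducible, and
pairwise non-isomorphic. -/
theorem symPow_representations (p : ℕ) [Fact p.Prime] (k : Type) [Field k] [IsAlgClosed k]
    [CharP k p] :
    (∀ d : ℕ, symAction p k d 1 = LinearMap.id) ∧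
    (∀ (d : ℕ) (g h : SpecialLinearGroup (Fin 2) (ZMod p)),
      symAction p k d (g * h) = symAction p k d g ∘ₗ symAction p k d h) ∧
    (∀ d : ℕ, finrank k (homogeneousSubmodule (Fin 2) k d) = d + 1) ∧
    (∀ d : ℕ, d ≤ p - 1 →
      ∀ U : Submodule k (homogeneousSubmodule (Fin 2) k d),
        (∀ g, ∀ u ∈ U, symAction p k d g u ∈ U) → U = ⊥ ∨ U = ⊤) ∧
    (∀ d e : ℕ, d ≤ p - 1 → e ≤ p - 1 → d ≠ e →
      ¬ ∃ φ : homogeneousSubmodule (Fin 2) k d ≃ₗ[k] homogeneousSubmodule (Fin 2) k e,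
        ∀ g v, φ (symAction p k d g v) = symAction p k e g (φ v)) := by
  refine ⟨?_, ?_, ?_, ?_, ?_⟩
  · intro d
    apply LinearMap.ext
    intro x
    refine Subtype.ext ?_
    have h1 : (symAction p k d 1 x : MvPolynomial (Fin 2) k) = substAlg p k 1 x := rfl
    rw [h1, SymPowAux.substAlg_one p k]
    rfl
  · intro d g h
    apply LinearMap.ext
    intro x
    refine Subtype.ext ?_
    have h1 : (symAction p k d (g * h) x : MvPolynomial (Fin 2) k)
        = substAlg p k (g * h) x := rfl
    have h2 : ((symAction p k d g ∘ₗ symAction p k d h) x : MvPolynomial (Fin 2) k)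
        = substAlg p k g (substAlg p k h x) := rfl
    rw [h1, h2, SymPowAux.substAlg_mul p k g h]
    rfl
  · exact fun d => SymPowAux.finrank_eq k d
  · intro d hd U hU
    by_cases hbot : U = ⊥
    · exact Or.inl hbot
    right
    obtain ⟨y, hyU, hy0⟩ := (Submodule.ne_bot_iff U).mp hbot
    have hWV : U.map (homogeneousSubmodule (Fin 2) k d).subtype
        ≤ homogeneousSubmodule (Fin 2) k d := by
      rintro x ⟨y', hy', rfl⟩
      exact y'.2
    have hWcl : ∀ g : SpecialLinearGroup (Fin 2) (ZMod p),
        ∀ f ∈ U.map (homogeneousSubmodule (Fin 2) k d).subtype,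
          substAlg p k g f ∈ U.map (homogeneousSubmodule (Fin 2) k d).subtype := by
      intro g f hf
      obtain ⟨y', hy', rfl⟩ := hf
      exact ⟨symAction p k d g y', hU g y' hy', rfl⟩
    have hp2 : 2 ≤ p := (Fact.out : p.Prime).two_le
    have hy1 : (y : MvPolynomial (Fin 2) k) ≠ 0 := by
      intro h0
      exact hy0 (Subtype.ext (by simpa using h0))
    have hle := SymPowAux.irreducible_W p k d (by omega) _ hWV hWcl y ⟨y, hyU, rfl⟩ hy1
    rw [eq_top_iff]
    intro x _
    obtain ⟨y', hy', hyx⟩ := hle x.2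
    have hyx' : y' = x := Subtype.ext hyx
    exact hyx' ▸ hy'
  · rintro d e hd he hne ⟨φ, -⟩
    have h := φ.finrank_eq
    rw [SymPowAux.finrank_eq k d, SymPowAux.finrank_eq k e] at h
    omega
end

section
/- For a prime p ≥ 5, any multiplicative 3-matching in PSL(2,p) has size at most C·p^{8/3} for some absolute constant C, assuming that PSL(2,p) contains no product-free triple of subsets each of size greater than C'·p^{8/3}. -/
open Matrix

/-- Assuming Gowers's bound (no product-free triple of subsets of `PSL(2,p)`
each of size greater than `C' * p^(8/3)`), every multiplicative 3-matching in `PSL(2,p)`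
has size at most `C * p^(8/3)` for an absolute constant `C`. -/
theorem matching_bound_PSL (C' : ℝ) :
    ∃ C : ℝ, ∀ (p : ℕ) [Fact p.Prime], 5 ≤ p →
      (∀ A B D : Finset (ProjectiveSpecialLinearGroup (Fin 2) (ZMod p)),
        (∀ a ∈ A, ∀ b ∈ B, ∀ d ∈ D, a * b * d ≠ 1) →
        (A.card : ℝ) ≤ C' * (p : ℝ) ^ ((8 : ℝ) / 3) ∨
        (B.card : ℝ) ≤ C' * (p : ℝ) ^ ((8 : ℝ) / 3) ∨
        (D.card : ℝ) ≤ C' * (p : ℝ) ^ ((8 : ℝ) / 3)) →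
      ∀ (m : ℕ) (a b c : Fin m → ProjectiveSpecialLinearGroup (Fin 2) (ZMod p)),
        (∀ i j k : Fin m, a i * b j * c k = 1 ↔ i = j ∧ j = k) →
        (m : ℝ) ≤ C * (p : ℝ) ^ ((8 : ℝ) / 3) := by
  refine ⟨3 * max C' 0 + 2, ?_⟩
  intro p _ hp hyp m a b c hm
  set X : ℝ := (p : ℝ) ^ ((8 : ℝ) / 3) with hX
  classical
  have hX1 : (1 : ℝ) ≤ X := by
    apply Real.one_le_rpow
    · have h1p : (1 : ℕ) ≤ p := by omega
      exact_mod_cast h1p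
    · norm_num
  have hX0 : (0 : ℝ) ≤ X := le_trans zero_le_one hX1
  have hdiag : ∀ i, a i * b i * c i = 1 := fun i => (hm i i i).mpr ⟨rfl, rfl⟩
  set t := m / 3 with ht
  have h3t : 3 * t ≤ m := by omega
  have hA : ∀ i : Fin t, (i.1 : ℕ) < m := fun i => by omega
  have hB : ∀ i : Fin t, t + i.1 < m := fun i => by omega
  have hD : ∀ i : Fin t, 2 * t + i.1 < m := fun i => by omega
  have ha : Function.Injective a := by
    intro i j hij
    have : a i * b j * c j = 1 := by rw [hij]; exact hdiag j
    exact ((hm i j j).mp this).1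
  have hb : Function.Injective b := by
    intro i j hij
    have : a j * b i * c j = 1 := by rw [hij]; exact hdiag j
    exact (((hm j i j).mp this).1).symm
  have hc : Function.Injective c := by
    intro i j hij
    have : a j * b j * c i = 1 := by rw [hij]; exact hdiag j
    exact (((hm j j i).mp this).2).symm
  set A := Finset.image (fun i : Fin t => a ⟨i.1, hA i⟩) Finset.univ with hAdef
  set B := Finset.image (fun i : Fin t => b ⟨t + i.1, hB i⟩) Finset.univ with hBdef
  set D := Finset.image (fun i : Fin t => c ⟨2 * t + i.1, hD i⟩) Finset.univ with hDdef
  have hAc : A.card = t := by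
    rw [hAdef, Finset.card_image_of_injective _ (fun i j h => by
      have h2 := congrArg Fin.val (ha h)
      exact Fin.ext (by simpa using h2))]
    simp
  have hBc : B.card = t := by
    rw [hBdef, Finset.card_image_of_injective _ (fun i j h => by
      have h2 := congrArg Fin.val (hb h)
      simp only at h2
      exact Fin.ext (by omega))]
    simp
  have hDc : D.card = t := by
    rw [hDdef, Finset.card_image_of_injective _ (fun i j h => by
      have h2 := congrArg Fin.val (hc h)
      simp only at h2
      exact Fin.ext (by omega))]
    simp
  have hfree : ∀ x ∈ A, ∀ y ∈ B, ∀ z ∈ D, x * y * z ≠ 1 := by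
    intro x hx y hy z hz hxyz
    rw [hAdef, Finset.mem_image] at hx
    rw [hBdef, Finset.mem_image] at hy
    rw [hDdef, Finset.mem_image] at hz
    obtain ⟨i, -, rfl⟩ := hx
    obtain ⟨j, -, rfl⟩ := hy
    obtain ⟨k, -, rfl⟩ := hz
    obtain ⟨h1, -⟩ := (hm _ _ _).mp hxyz
    have h2 := congrArg Fin.val h1
    simp only at h2
    have hi := i.isLt
    omega
  have hkey : (t : ℝ) ≤ max C' 0 * X := by
    have hC : C' * X ≤ max C' 0 * X := by
      apply mul_le_mul_of_nonneg_right (le_max_left _ _) hX0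
    rcases hyp A B D hfree with h | h | h
    · rw [hAc] at h; exact h.trans hC
    · rw [hBc] at h; exact h.trans hC
    · rw [hDc] at h; exact h.trans hC
  have hm3 : (m : ℝ) ≤ 3 * (t : ℝ) + 2 := by
    have : m ≤ 3 * t + 2 := by omega
    exact_mod_cast this
  calc (m : ℝ) ≤ 3 * (t : ℝ) + 2 := hm3
    _ ≤ 3 * (max C' 0 * X) + 2 * X := by nlinarith
    _ = (3 * max C' 0 + 2) * X := by ring
end
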